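/- Fix an integer r ≥ 2 and let A be the formal power series over ℚ with coefficients a_n = \binom{rn}{n} / ((r-1)n + 1) (the Fuss–Catalan numbers; a_0 = 1). Then X·A^r = A - 1. In particular, for r = 2 the Catalan numbers satisfy this equation, and these sequences shift one place left under r-fold self-convolution of the generating function. -/

import Mathlib

/-- The ordinary generating function of the Fuss–Catalan numbers
`a n = (choose (r*n) n) / ((r-1)*n + 1)`. -/
noncomputable def fussCatalanSeries (r : ℕ) : PowerSeries ℚ :=
  PowerSeries.mk fun n => (Nat.choose (r * n) n : ℚ) / (((r : ℚ) - 1) * n + 1)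

namespace FussCatalanAux

open Finset

/-- Fuss–Catalan numbers as rationals. -/
def a (r n : ℕ) : ℚ := (Nat.choose (r * n) n : ℚ) / (((r : ℚ) - 1) * n + 1)

/-- Raney values `R_n(s) = s/(rn+s) * C(rn+s, n)` written without division. -/
def Rn (r s : ℕ) : ℕ → ℚ
  | 0 => 1
  | n + 1 => ((r * n + r + s).choose (n + 1) : ℚ) - r * ((r * n + r + s - 1).choose n : ℚ)

lemma a_zero (r : ℕ) : a r 0 = 1 := by simp [a]

lemma dpos (r : ℕ) (hr : 2 ≤ r) (n : ℕ) : (0:ℚ) < ((r : ℚ) - 1) * n + 1 := by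
  have h2 : (2:ℚ) ≤ (r:ℚ) := by exact_mod_cast hr
  have hn : (0:ℚ) ≤ (n:ℚ) := Nat.cast_nonneg n
  nlinarith

lemma Rn_zero (r : ℕ) (hr : 2 ≤ r) (n : ℕ) : Rn r 0 (n + 1) = 0 := by
  have h := Nat.add_one_mul_choose_eq (r * n + r - 1) n
  have h1 : r * n + r - 1 + 1 = r * n + r := by omega
  rw [h1] at h
  -- h : (r*n+r) * choose (r*n+r-1) n = choose (r*n+r) (n+1) * (n+1)
  have hq : ((r:ℚ) * n + r) * ((r * n + r - 1).choose n : ℚ)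
      = ((r * n + r).choose (n + 1) : ℚ) * ((n:ℚ) + 1) := by
    have := congrArg (Nat.cast : ℕ → ℚ) h
    push_cast at this
    linear_combination this
  have hne : ((n:ℚ) + 1) ≠ 0 := by positivity
  simp only [Rn, Nat.add_zero]
  have key : ((n:ℚ) + 1) * (((r * n + r).choose (n + 1) : ℚ)
      - (r:ℚ) * ((r * n + r - 1).choose n : ℚ)) = 0 := by linear_combination -hq
  rcases mul_eq_zero.mp key with h' | h'
  · exact absurd h' hne
  · exact h'

lemma Rn_one (r : ℕ) (hr : 2 ≤ r) (n : ℕ) : Rn r 1 n = a r n := by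
  cases n with
  | zero => simp [Rn, a]
  | succ k =>
    have h1 : r * k + r + 1 - 1 = r * k + r := by omega
    have hP : (r * k + r + 1).choose (k + 1) = (r * k + r).choose k + (r * k + r).choose (k + 1) :=
      Nat.choose_succ_succ (r * k + r) k
    have hR := Nat.choose_succ_right_eq (r * k + r) k
    have hle : k ≤ r * k + r := by
      have : k ≤ r * k := Nat.le_mul_of_pos_left k (by omega)
      omega
    have hq : ((r * k + r).choose (k + 1) : ℚ) * ((k:ℚ) + 1)
        = ((r * k + r).choose k : ℚ) * ((r:ℚ) * k + r - k) := by
      have := congrArg (Nat.cast : ℕ → ℚ) hR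
      push_cast [Nat.cast_sub hle] at this
      linear_combination this
    have hd : (0:ℚ) < ((r : ℚ) - 1) * ((k:ℚ) + 1) + 1 := by
      have := dpos r hr (k + 1); push_cast at this; linarith
    simp only [Rn, a]
    rw [h1, hP]
    have hrk : r * (k + 1) = r * k + r := by ring
    rw [hrk]
    push_cast
    rw [eq_div_iff (ne_of_gt hd)]
    linear_combination ((r:ℚ) - 1) * hq

lemma Rn_diff (r : ℕ) (hr : 2 ≤ r) (s n : ℕ) :
    Rn r (s + 1) (n + 1) - Rn r s (n + 1) = Rn r (s + r) n := by
  cases n with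
  | zero =>
    simp only [Rn]
    have e1 : r * 0 + r + (s + 1) - 1 = r + s := by omega
    have e2 : r * 0 + r + s - 1 = r + s - 1 := by omega
    simp [e1, e2, Nat.choose_one_right]
  | succ j =>
    have hr1 : 1 ≤ r := by omega
    simp only [Rn]
    have e2 : r * (j + 1) + r + (s + 1) - 1 = r * j + r + r + s := by
      have : r * (j + 1) = r * j + r := by ring
      omega
    have e1 : r * (j + 1) + r + (s + 1) = (r * j + r + r + s) + 1 := by ring
    have e3 : r * (j + 1) + r + s = r * j + r + r + s := by ring
    have e4 : r * (j + 1) + r + s - 1 = (r * j + r + r + s) - 1 := by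
      have : r * (j + 1) = r * j + r := by ring
      omega
    have e5 : r * j + r + (s + r) = r * j + r + r + s := by ring
    have e6 : r * j + r + (s + r) - 1 = (r * j + r + r + s) - 1 := by omega
    rw [e2, e1, e4, e3, e6, e5]
    set N : ℕ := r * j + r + r + s with hN
    have hN1 : 1 ≤ N := by omega
    have hNN : N - 1 + 1 = N := by omega
    have p1 : (N + 1).choose (j + 1 + 1) = N.choose (j + 1) + N.choose (j + 1 + 1) :=
      Nat.choose_succ_succ N (j + 1)
    have p2 : N.choose (j + 1) = (N - 1).choose j + (N - 1).choose (j + 1) := by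
      have h := Nat.choose_succ_succ (N - 1) j
      rw [Nat.succ_eq_add_one, Nat.succ_eq_add_one] at h
      rw [hNN] at h
      exact h
    have p3 : N.choose (j + 1 + 1) = (N - 1).choose (j + 1) + (N - 1).choose (j + 1 + 1) := by
      have h := Nat.choose_succ_succ (N - 1) (j + 1)
      rw [Nat.succ_eq_add_one, Nat.succ_eq_add_one] at h
      rw [hNN] at h
      exact h
    rw [p1, p2, p3]
    push_cast
    ring

lemma Rn_r (r : ℕ) (hr : 2 ≤ r) (k : ℕ) : Rn r r k = a r (k + 1) := by
  cases k with
  | zero =>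
    have hr0 : ((r:ℚ)) ≠ 0 := Nat.cast_ne_zero.mpr (by omega)
    simp only [Rn, a]
    rw [Nat.mul_one, Nat.choose_one_right]
    push_cast
    rw [eq_comm, div_eq_one_iff_eq (by intro h; apply hr0; linarith)]
    ring
  | succ j =>
    simp only [Rn, a]
    set N : ℕ := r * j + r + r with hN
    have hN1 : 1 ≤ N := by omega
    have hNN : N - 1 + 1 = N := by omega
    have hsucc := Nat.add_one_mul_choose_eq (N - 1) j
    rw [hNN] at hsucc
    have hq : ((N:ℚ)) * ((N - 1).choose j : ℚ) = (N.choose (j + 1) : ℚ) * ((j:ℚ) + 1) := by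
      exact_mod_cast congrArg (Nat.cast : ℕ → ℚ) hsucc
    have hle : j + 1 ≤ N := by
      have : j ≤ r * j := Nat.le_mul_of_pos_left j (by omega)
      omega
    have hR := Nat.choose_succ_right_eq N (j + 1)
    have hq2 : (N.choose (j + 1 + 1) : ℚ) * ((j:ℚ) + 1 + 1)
        = (N.choose (j + 1) : ℚ) * ((N:ℚ) - ((j:ℚ) + 1)) := by
      have := congrArg (Nat.cast : ℕ → ℚ) hR
      push_cast [Nat.cast_sub hle] at this
      linear_combination this
    have hNr : (N:ℚ) = (r:ℚ) * ((j:ℚ) + 2) := by rw [hN]; push_cast; ring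
    rw [hNr] at hq hq2
    have hd : (0:ℚ) < ((r : ℚ) - 1) * ((j:ℚ) + 1 + 1) + 1 := by
      have := dpos r hr (j + 2); push_cast at this; linarith
    have erw2 : r * (j + 1 + 1) = N := by rw [hN]; ring
    rw [erw2]
    push_cast
    rw [eq_div_iff (ne_of_gt hd)]
    have hj2 : ((j:ℚ) + 1 + 1) ≠ 0 := by positivity
    apply mul_left_cancel₀ hj2
    linear_combination (-((((r:ℚ) - 1) * ((j:ℚ) + 1 + 1)) + 1)) * hq - hq2

lemma conv (r : ℕ) (hr : 2 ≤ r) :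
    ∀ n m, ∑ k ∈ Finset.range (n + 1), Rn r m k * a r (n - k) = Rn r (m + 1) n := by
  intro n
  induction n with
  | zero =>
    intro m
    show ∑ k ∈ Finset.range 1, Rn r m k * a r (0 - k) = Rn r (m + 1) 0
    rw [Finset.sum_range_one, Nat.sub_zero, a_zero, mul_one]
    rfl
  | succ n ih =>
    intro m
    induction m with
    | zero =>
      rw [Finset.sum_range_succ']
      have h0 : ∑ k ∈ Finset.range (n + 1), Rn r 0 (k + 1) * a r (n + 1 - (k + 1)) = 0 :=
        Finset.sum_eq_zero fun k _ => by rw [Rn_zero r hr]; ring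
      rw [h0, zero_add]
      have : Rn r 0 0 = 1 := rfl
      rw [this, one_mul, Nat.sub_zero, Rn_one r hr]
    | succ m ihm =>
      have hsplit : ∀ k, Rn r (m + 1) k * a r (n + 1 - k)
          = Rn r m k * a r (n + 1 - k) + (Rn r (m + 1) k - Rn r m k) * a r (n + 1 - k) :=
        fun k => by ring
      rw [Finset.sum_congr rfl fun k _ => hsplit k, Finset.sum_add_distrib, ihm]
      have hsum : ∑ k ∈ Finset.range (n + 2),
          (Rn r (m + 1) k - Rn r m k) * a r (n + 1 - k) = Rn r (m + r + 1) n := by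
        rw [Finset.sum_range_succ']
        have h0 : (Rn r (m + 1) 0 - Rn r m 0) * a r (n + 1 - 0) = 0 := by
          have h1 : Rn r (m + 1) 0 = 1 := rfl
          have h2 : Rn r m 0 = 1 := rfl
          rw [h1, h2]; ring
        rw [h0, add_zero]
        have heq : ∀ k, k ∈ Finset.range (n + 1) →
            (Rn r (m + 1) (k + 1) - Rn r m (k + 1)) * a r (n + 1 - (k + 1))
            = Rn r (m + r) k * a r (n - k) := by
          intro k _
          rw [Rn_diff r hr m k, Nat.succ_sub_succ]
        rw [Finset.sum_congr rfl heq, ih (m + r)]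
      rw [hsum]
      have hD := Rn_diff r hr (m + 1) n
      have he : m + 1 + r = m + r + 1 := by omega
      rw [he] at hD
      linear_combination -hD

lemma coeff_A (r n : ℕ) :
    PowerSeries.coeff n (fussCatalanSeries r) = a r n := by
  rw [fussCatalanSeries, PowerSeries.coeff_mk]; rfl

lemma coeff_pow (r : ℕ) (hr : 2 ≤ r) (m n : ℕ) :
    PowerSeries.coeff n ((fussCatalanSeries r) ^ m) = Rn r m n := by
  induction m generalizing n with
  | zero =>
    rw [pow_zero, PowerSeries.coeff_one]
    cases n with
    | zero => simp [Rn]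
    | succ k => simp [Rn_zero r hr k]
  | succ m ih =>
    rw [pow_succ, PowerSeries.coeff_mul, Finset.Nat.sum_antidiagonal_eq_sum_range_succ_mk]
    have : ∀ k, k ∈ Finset.range (n + 1) →
        PowerSeries.coeff k ((fussCatalanSeries r) ^ m)
          * PowerSeries.coeff (n - k) (fussCatalanSeries r)
        = Rn r m k * a r (n - k) := by
      intro k _
      rw [ih k, coeff_A]
    rw [Finset.sum_congr rfl this, conv r hr n m]

end FussCatalanAux

/-- For `r ≥ 2`, the generating function `A` of the Fuss–Catalan numbers
`a n = (choose (r*n) n)/((r-1)n + 1)` satisfies `X * A^r = A - 1`: the sequence is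
shifted one place left by `r`-fold self-convolution.  For `r = 2` these are the
Catalan numbers. -/
theorem fussCatalan_conv_shift (r : ℕ) (hr : 2 ≤ r) :
    PowerSeries.X * (fussCatalanSeries r) ^ r = fussCatalanSeries r - 1 := by
  apply PowerSeries.ext
  intro n
  cases n with
  | zero =>
    rw [PowerSeries.coeff_zero_X_mul, map_sub, FussCatalanAux.coeff_A,
      FussCatalanAux.a_zero, PowerSeries.coeff_one]
    simp
  | succ k =>
    rw [PowerSeries.coeff_succ_X_mul, map_sub, FussCatalanAux.coeff_A,
      FussCatalanAux.coeff_pow r hr r k, FussCatalanAux.Rn_r r hr k, PowerSeries.coeff_one]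
    simp
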